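/- Let λ ≥ 1 and r > 0. Among all measurable densities ρ : ℝ^d → [0,1] with ∫ρ = λ·|B_r|, the characteristic function of the ball B_{λ^{1/d} r} (centered at the same center) is the unique minimizer of the squared 2-Wasserstein distance ρ ↦ W₂²(ρ, λ·1_{B_r}). -/

import Mathlib

open MeasureTheory Metric

/-- Squared 2-Wasserstein distance between two measures on a normed space,
defined as the infimum over couplings of the integral of the squared distance. -/
noncomputable def W2sq {E : Type*} [NormedAddCommGroup E] [MeasurableSpace E]
    (μ ν : Measure E) : ENNReal :=
  ⨅ (π : Measure (E × E)) (_ : π.map Prod.fst = μ) (_ : π.map Prod.snd = ν),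
    ∫⁻ p, ENNReal.ofReal (‖p.1 - p.2‖ ^ 2) ∂π

lemma W2sq_le {E : Type*} [NormedAddCommGroup E] [MeasurableSpace E]
    {μ ν : Measure E} (π : Measure (E × E)) (h1 : π.map Prod.fst = μ)
    (h2 : π.map Prod.snd = ν) :
    W2sq μ ν ≤ ∫⁻ p, ENNReal.ofReal (‖p.1 - p.2‖ ^ 2) ∂π := by
  refine iInf_le_of_le π ?_
  rw [iInf_pos h1, iInf_pos h2]

lemma ptwise {E : Type*} [NormedAddCommGroup E] [InnerProductSpace ℝ E]
    {c : ℝ} (hc : 1 ≤ c) (x y : E) :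
    (1 - 1/c) * ‖x‖^2 ≤ ‖x - y‖^2 + (c - 1) * ‖y‖^2 := by
  have hc0 : 0 < c := lt_of_lt_of_le one_pos hc
  have h1 : (0:ℝ) ≤ ‖x - c • y‖^2 := sq_nonneg _
  have e1 : ‖x - c • y‖^2 = ‖x‖^2 - 2 * (c * inner ℝ x y) + c^2 * ‖y‖^2 := by
    rw [@norm_sub_sq_real, real_inner_smul_right, norm_smul]
    rw [Real.norm_eq_abs, abs_of_pos hc0]; ring
  have e2 : ‖x - y‖^2 = ‖x‖^2 - 2 * inner ℝ x y + ‖y‖^2 := by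
    rw [@norm_sub_sq_real]
  rw [e1] at h1
  rw [e2]
  have hinv : c * (1/c) = 1 := mul_one_div_cancel hc0.ne'
  nlinarith [h1, hc0, hinv, sq_nonneg (‖x‖ - c * ‖y‖)]

lemma le_W2sq {E : Type*} [NormedAddCommGroup E] [InnerProductSpace ℝ E]
    [MeasurableSpace E] [OpensMeasurableSpace E] [SecondCountableTopology E]
    (σ ν : Measure E) {c : ℝ} (hc : 1 ≤ c) :
    ENNReal.ofReal (1 - 1/c) * ∫⁻ x, ENNReal.ofReal (‖x‖^2) ∂σ
      ≤ W2sq σ ν + ENNReal.ofReal (c - 1) * ∫⁻ y, ENNReal.ofReal (‖y‖^2) ∂ν := by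
  have hc0 : 0 < c := lt_of_lt_of_le one_pos hc
  have hnn1 : (0:ℝ) ≤ 1 - 1/c := by
    rw [sub_nonneg, div_le_one hc0]; exact hc
  have m1 : Measurable fun x : E => ENNReal.ofReal (‖x‖^2) :=
    ((measurable_norm.pow_const 2)).ennreal_ofReal
  have m2 : Measurable fun p : E × E => ENNReal.ofReal (‖p.1 - p.2‖^2) :=
    (((continuous_fst.sub continuous_snd).norm.pow 2).measurable).ennreal_ofReal
  have mA : Measurable fun a : E × E => ENNReal.ofReal (‖a.1‖ ^ 2) :=
    (measurable_fst.norm.pow_const 2).ennreal_ofReal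
  have mB : Measurable fun a : E × E => ENNReal.ofReal (‖a.2‖ ^ 2) :=
    (measurable_snd.norm.pow_const 2).ennreal_ofReal
  set K := ENNReal.ofReal (c - 1) * ∫⁻ y, ENNReal.ofReal (‖y‖^2) ∂ν with hK
  set L := ENNReal.ofReal (1 - 1/c) * ∫⁻ x, ENNReal.ofReal (‖x‖^2) ∂σ with hL
  have key : L - K ≤ W2sq σ ν := by
    refine le_iInf fun π => le_iInf fun h1 => le_iInf fun h2 => tsub_le_iff_right.2 ?_
    calc L = ∫⁻ a : E × E, ENNReal.ofReal (1 - 1/c) * ENNReal.ofReal (‖a.1‖^2) ∂π := by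
          rw [hL, ← h1, lintegral_map m1 measurable_fst,
            lintegral_const_mul _ mA]
    _ ≤ ∫⁻ a : E × E, (ENNReal.ofReal (‖a.1 - a.2‖^2)
          + ENNReal.ofReal (c - 1) * ENNReal.ofReal (‖a.2‖^2)) ∂π := by
          refine lintegral_mono fun p => ?_
          rw [← ENNReal.ofReal_mul hnn1, ← ENNReal.ofReal_mul (sub_nonneg.2 hc),
            ← ENNReal.ofReal_add (sq_nonneg _) (mul_nonneg (sub_nonneg.2 hc) (sq_nonneg _))]
          exact ENNReal.ofReal_le_ofReal (ptwise hc p.1 p.2)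
    _ = (∫⁻ p, ENNReal.ofReal (‖p.1 - p.2‖ ^ 2) ∂π) + K := by
          rw [lintegral_add_left m2, lintegral_const_mul _ mB,
            ← lintegral_map m1 measurable_snd, h2, hK]
  calc L ≤ L - K + K := le_tsub_add
  _ ≤ W2sq σ ν + K := add_le_add_left key K

lemma map_smul_ball (d : ℕ) (hd : 1 ≤ d) (lam r : ℝ) (hlam : 1 ≤ lam) (hr : 0 < r) :
    (volume.withDensity (Set.indicator (closedBall (0 : EuclideanSpace ℝ (Fin d)) r)
        (fun _ => ENNReal.ofReal lam))).map (fun y => (lam ^ ((1:ℝ)/d)) • y)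
      = volume.withDensity
          (Set.indicator (closedBall (0 : EuclideanSpace ℝ (Fin d)) (lam ^ ((1:ℝ)/d) * r))
            (fun _ => (1 : ENNReal))) := by
  have hlam0 : (0:ℝ) < lam := lt_of_lt_of_le one_pos hlam
  set c : ℝ := lam ^ ((1:ℝ)/d) with hc
  have hc0 : 0 < c := Real.rpow_pos_of_pos hlam0 _
  have hd0 : (d:ℝ) ≠ 0 := by positivity
  have hcd : c ^ d = lam := by
    rw [hc, ← Real.rpow_natCast (lam ^ ((1:ℝ)/d)) d, ← Real.rpow_mul hlam0.le,
      one_div_mul_cancel hd0, Real.rpow_one]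
  rw [withDensity_indicator measurableSet_closedBall, withDensity_const,
    withDensity_indicator measurableSet_closedBall, withDensity_const, one_smul]
  have hpre : (fun y : EuclideanSpace ℝ (Fin d) => c • y) ⁻¹' (closedBall 0 (c * r))
      = closedBall 0 r := by
    ext x
    simp only [Set.mem_preimage, mem_closedBall, dist_zero_right, norm_smul,
      Real.norm_eq_abs, abs_of_pos hc0]
    exact mul_le_mul_iff_right₀ hc0
  rw [Measure.map_smul, ← hpre,
    ← Measure.restrict_map (measurable_const_smul c) measurableSet_closedBall,
    Measure.map_addHaar_smul volume hc0.ne', Measure.restrict_smul, smul_smul,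
    finrank_euclideanSpace_fin, hcd, abs_of_nonneg (inv_nonneg.2 hlam0.le),
    ← ENNReal.ofReal_mul hlam0.le, mul_inv_cancel₀ hlam0.ne', ENNReal.ofReal_one, one_smul]

lemma bathtub (d : ℕ) (R : ℝ) (hR : 0 < R) (ρ : EuclideanSpace ℝ (Fin d) → ℝ)
    (hm : Measurable ρ) (hicc : ∀ x, ρ x ∈ Set.Icc (0:ℝ) 1)
    (hmass : (∫ x, ρ x) = (volume (closedBall (0 : EuclideanSpace ℝ (Fin d)) R)).toReal) :
    (∫⁻ x in closedBall (0 : EuclideanSpace ℝ (Fin d)) R, ENNReal.ofReal (‖x‖^2))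
      ≤ (∫⁻ x, ENNReal.ofReal (ρ x) * ENNReal.ofReal (‖x‖^2)) ∧
    ((∫⁻ x, ENNReal.ofReal (ρ x) * ENNReal.ofReal (‖x‖^2))
        ≤ (∫⁻ x in closedBall (0 : EuclideanSpace ℝ (Fin d)) R, ENNReal.ofReal (‖x‖^2)) →
      ρ =ᵐ[volume] Set.indicator (closedBall (0 : EuclideanSpace ℝ (Fin d)) R)
        (fun _ => (1:ℝ))) := by
  set B := closedBall (0 : EuclideanSpace ℝ (Fin d)) R with hB
  set G : EuclideanSpace ℝ (Fin d) → ℝ := B.indicator (fun x => ‖x‖^2) with hG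
  set χ : EuclideanSpace ℝ (Fin d) → ℝ := B.indicator (fun _ => (1:ℝ)) with hχ
  set F : EuclideanSpace ℝ (Fin d) → ℝ := fun x => ρ x * ‖x‖^2 with hF
  have hGnn : ∀ x, 0 ≤ G x := fun x => Set.indicator_nonneg (fun y _ => sq_nonneg _) x
  have hFnn : ∀ x, 0 ≤ F x := fun x => mul_nonneg (hicc x).1 (sq_nonneg _)
  have hGint : Integrable G := by
    rw [hG, integrable_indicator_iff measurableSet_closedBall]
    exact ContinuousOn.integrableOn_compact (isCompact_closedBall _ _)
      ((continuous_norm.pow 2).continuousOn)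
  have hχint : Integrable χ := by
    rw [hχ, integrable_indicator_iff measurableSet_closedBall]
    exact integrableOn_const measure_closedBall_lt_top.ne
  have hintχ : (∫ x, χ x) = (volume B).toReal := by
    rw [hχ, integral_indicator_const (1:ℝ) measurableSet_closedBall, smul_eq_mul, mul_one, measureReal_def]
  have hρint : Integrable ρ := by
    by_contra h
    rw [integral_undef h] at hmass
    exact absurd hmass.symm (ne_of_gt (ENNReal.toReal_pos
      (measure_closedBall_pos _ _ hR).ne' measure_closedBall_lt_top.ne))
  have hlintF : (∫⁻ x, ENNReal.ofReal (F x))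
      = ∫⁻ x, ENNReal.ofReal (ρ x) * ENNReal.ofReal (‖x‖^2) :=
    lintegral_congr fun x => ENNReal.ofReal_mul (hicc x).1
  have hIG : (∫⁻ x in B, ENNReal.ofReal (‖x‖^2)) = ENNReal.ofReal (∫ x, G x) := by
    rw [ofReal_integral_eq_lintegral_ofReal hGint (ae_of_all _ hGnn),
      ← lintegral_indicator measurableSet_closedBall _]
    refine lintegral_congr fun x => ?_
    by_cases hx : x ∈ B
    · rw [Set.indicator_of_mem hx, hG, Set.indicator_of_mem hx]
    · rw [Set.indicator_of_notMem hx, hG, Set.indicator_of_notMem hx, ENNReal.ofReal_zero]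
  set f : EuclideanSpace ℝ (Fin d) → ℝ := fun x => (‖x‖^2 - R^2) * (ρ x - χ x) with hf
  have hfnn : ∀ x, 0 ≤ f x := by
    intro x
    by_cases hx : x ∈ B
    · have h1 : ‖x‖ ≤ R := by simpa [hB, dist_zero_right] using hx
      have h2 : ‖x‖^2 ≤ R^2 := by nlinarith [norm_nonneg x]
      have h3 : χ x = 1 := Set.indicator_of_mem hx _
      show 0 ≤ (‖x‖^2 - R^2) * (ρ x - χ x)
      rw [h3]
      nlinarith [(hicc x).2]
    · have h1 : R ≤ ‖x‖ := by
        by_contra h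
        exact hx (by simpa [hB, dist_zero_right] using le_of_not_ge h)
      have h2 : R^2 ≤ ‖x‖^2 := by nlinarith [hR.le]
      have h3 : χ x = 0 := Set.indicator_of_notMem hx _
      show 0 ≤ (‖x‖^2 - R^2) * (ρ x - χ x)
      rw [h3]
      exact mul_nonneg (by linarith) (by linarith [(hicc x).1])
  have hfeq : ∀ x, f x = F x - G x - R^2 * (ρ x - χ x) := by
    intro x
    by_cases hx : x ∈ B
    · have hGx : G x = ‖x‖^2 := Set.indicator_of_mem hx _
      have hχx : χ x = 1 := Set.indicator_of_mem hx _
      show (‖x‖^2 - R^2) * (ρ x - χ x) = _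
      rw [hGx, hχx]; ring
    · have hGx : G x = 0 := Set.indicator_of_notMem hx _
      have hχx : χ x = 0 := Set.indicator_of_notMem hx _
      show (‖x‖^2 - R^2) * (ρ x - χ x) = _
      rw [hGx, hχx]; ring
  have core : (∫⁻ x, ENNReal.ofReal (ρ x) * ENNReal.ofReal (‖x‖^2)) ≠ ⊤ →
      Integrable F ∧ Integrable f ∧ (∫ x, f x) = (∫ x, F x) - (∫ x, G x) := by
    intro hnotop
    have hFint : Integrable F := by
      refine ⟨(hm.mul (measurable_norm.pow_const 2)).aestronglyMeasurable, ?_⟩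
      rw [hasFiniteIntegral_iff_ofReal (ae_of_all _ hFnn)]
      exact lt_of_le_of_ne le_top (hlintF ▸ hnotop)
    have hfint : Integrable f := by
      have h1 : Integrable (fun x => F x - G x - R^2 * (ρ x - χ x)) :=
        (hFint.sub hGint).sub ((hρint.sub hχint).const_mul _)
      exact h1.congr (ae_of_all _ fun x => (hfeq x).symm)
    refine ⟨hFint, hfint, ?_⟩
    have h2 : (∫ x, f x) = ∫ x, (F x - G x - R^2 * (ρ x - χ x)) :=
      integral_congr_ae (ae_of_all _ hfeq)
    have i1 : Integrable (fun x => F x - G x) := hFint.sub hGint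
    have i2 : Integrable (fun x => R^2 * (ρ x - χ x)) := (hρint.sub hχint).const_mul _
    rw [h2, integral_sub i1 i2, integral_sub hFint hGint, integral_const_mul _ _,
      integral_sub hρint hχint, hmass, hintχ, sub_self, mul_zero, sub_zero]
  constructor
  · by_cases hnotop : (∫⁻ x, ENNReal.ofReal (ρ x) * ENNReal.ofReal (‖x‖^2)) = ⊤
    · rw [hnotop]; exact le_top
    · obtain ⟨hFint, hfint, hif⟩ := core hnotop
      have h0 : (0:ℝ) ≤ ∫ x, f x := integral_nonneg hfnn
      have hGF : (∫ x, G x) ≤ ∫ x, F x := by linarith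
      rw [hIG, ← hlintF, ← ofReal_integral_eq_lintegral_ofReal hFint (ae_of_all _ hFnn)]
      exact ENNReal.ofReal_le_ofReal hGF
  · intro h
    have hnotop : (∫⁻ x, ENNReal.ofReal (ρ x) * ENNReal.ofReal (‖x‖^2)) ≠ ⊤ := by
      rw [hIG] at h
      exact ne_top_of_le_ne_top ENNReal.ofReal_ne_top h
    obtain ⟨hFint, hfint, hif⟩ := core hnotop
    have h0 : (0:ℝ) ≤ ∫ x, f x := integral_nonneg hfnn
    have hFG : (∫ x, F x) ≤ ∫ x, G x := by
      rw [hIG, ← hlintF, ← ofReal_integral_eq_lintegral_ofReal hFint (ae_of_all _ hFnn)] at h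
      exact (ENNReal.ofReal_le_ofReal_iff (integral_nonneg hGnn)).1 h
    have hf0 : (∫ x, f x) = 0 := le_antisymm (by linarith) h0
    have hae : f =ᵐ[volume] 0 := (integral_eq_zero_iff_of_nonneg hfnn hfint).1 hf0
    have hsph : ∀ᵐ x : EuclideanSpace ℝ (Fin d) ∂volume,
        x ∉ sphere (0:EuclideanSpace ℝ (Fin d)) R :=
      measure_eq_zero_iff_ae_notMem.1 (Measure.addHaar_sphere_of_ne_zero _ _ hR.ne')
    filter_upwards [hae, hsph] with x hfx hxs
    have hnR : ‖x‖ ≠ R := by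
      intro hc
      exact hxs (by simp [mem_sphere_iff_norm, hc])
    have h1 : ‖x‖^2 - R^2 ≠ 0 := by
      intro hc
      exact hnR (by nlinarith [norm_nonneg x, hR.le])
    have h2 : ρ x - χ x = 0 := by
      rcases mul_eq_zero.1 hfx with h | h
      · exact absurd h h1
      · exact h
    have : ρ x = χ x := by linarith
    exact this

/-- Among all densities `ρ : ℝ^d → [0,1]` with mass `λ |B_r|`, the indicator of
the ball `B_{λ^{1/d} r}` is the unique minimizer of `ρ ↦ W₂²(ρ, λ·1_{B_r})`. -/
theorem wasserstein_projection_of_ball (d : ℕ) (hd : 1 ≤ d) (lam r : ℝ)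
    (hlam : 1 ≤ lam) (hr : 0 < r) :
    ∀ ρ : EuclideanSpace ℝ (Fin d) → ℝ, Measurable ρ →
      (∀ x, ρ x ∈ Set.Icc (0:ℝ) 1) →
      (∫ x, ρ x) = lam * (volume (closedBall (0 : EuclideanSpace ℝ (Fin d)) r)).toReal →
      W2sq
        (volume.withDensity
          (Set.indicator (closedBall (0 : EuclideanSpace ℝ (Fin d)) (lam ^ ((1:ℝ)/d) * r))
            (fun _ => (1 : ENNReal))))
        (volume.withDensity
          (Set.indicator (closedBall (0 : EuclideanSpace ℝ (Fin d)) r)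
            (fun _ => ENNReal.ofReal lam)))
      ≤ W2sq (volume.withDensity (fun x => ENNReal.ofReal (ρ x)))
          (volume.withDensity
            (Set.indicator (closedBall (0 : EuclideanSpace ℝ (Fin d)) r)
              (fun _ => ENNReal.ofReal lam))) ∧
      (W2sq
          (volume.withDensity
            (Set.indicator (closedBall (0 : EuclideanSpace ℝ (Fin d)) (lam ^ ((1:ℝ)/d) * r))
              (fun _ => (1 : ENNReal))))
          (volume.withDensity
            (Set.indicator (closedBall (0 : EuclideanSpace ℝ (Fin d)) r)
              (fun _ => ENNReal.ofReal lam)))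
        = W2sq (volume.withDensity (fun x => ENNReal.ofReal (ρ x)))
            (volume.withDensity
              (Set.indicator (closedBall (0 : EuclideanSpace ℝ (Fin d)) r)
                (fun _ => ENNReal.ofReal lam))) →
        ρ =ᵐ[volume]
          Set.indicator (closedBall (0 : EuclideanSpace ℝ (Fin d)) (lam ^ ((1:ℝ)/d) * r))
            (fun _ => (1 : ℝ))) := by
  intro ρ hm hicc hmass
  have hlam0 : (0:ℝ) < lam := lt_of_lt_of_le one_pos hlam
  have hd0 : (d:ℝ) ≠ 0 := by positivity
  -- abbreviations
  set c : ℝ := lam ^ ((1:ℝ)/d) with hcdef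
  have hc0 : 0 < c := Real.rpow_pos_of_pos hlam0 _
  have hc1 : 1 ≤ c := Real.one_le_rpow hlam (by positivity)
  have hcd : c ^ d = lam := by
    rw [hcdef, ← Real.rpow_natCast (lam ^ ((1:ℝ)/d)) d, ← Real.rpow_mul hlam0.le,
      one_div_mul_cancel hd0, Real.rpow_one]
  have hR : 0 < c * r := mul_pos hc0 hr
  set B := closedBall (0 : EuclideanSpace ℝ (Fin d)) (c * r) with hBdef
  set b := closedBall (0 : EuclideanSpace ℝ (Fin d)) r with hbdef
  set μ := volume.withDensity (B.indicator (fun _ => (1 : ENNReal))) with hμdef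
  set ν := volume.withDensity (b.indicator (fun _ => ENNReal.ofReal lam)) with hνdef
  set ρμ := volume.withDensity (fun x => ENNReal.ofReal (ρ x)) with hρμdef
  have m1 : Measurable fun x : EuclideanSpace ℝ (Fin d) => ENNReal.ofReal (‖x‖^2) :=
    ((measurable_norm.pow_const 2)).ennreal_ofReal
  have m2 : Measurable fun p : EuclideanSpace ℝ (Fin d) × EuclideanSpace ℝ (Fin d) =>
      ENNReal.ofReal (‖p.1 - p.2‖^2) :=
    (((continuous_fst.sub continuous_snd).norm.pow 2).measurable).ennreal_ofReal
  have mT : Measurable fun y : EuclideanSpace ℝ (Fin d) => c • y := measurable_const_smul c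
  have hmap : ν.map (fun y => c • y) = μ := map_smul_ball d hd lam r hlam hr
  -- the three second moments
  set Iν := ∫⁻ y, ENNReal.ofReal (‖y‖^2) ∂ν with hIνdef
  set Iρ := ∫⁻ x, ENNReal.ofReal (ρ x) * ENNReal.ofReal (‖x‖^2) with hIρdef
  have hρmom : (∫⁻ x, ENNReal.ofReal (‖x‖^2) ∂ρμ) = Iρ := by
    rw [hρμdef, lintegral_withDensity_eq_lintegral_mul volume hm.ennreal_ofReal m1]
    rfl
  have hνr : ν = ENNReal.ofReal lam • volume.restrict b := by
    rw [hνdef, withDensity_indicator measurableSet_closedBall, withDensity_const]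
  have hμr : μ = volume.restrict B := by
    rw [hμdef, withDensity_indicator measurableSet_closedBall, withDensity_const, one_smul]
  have hIν_ne_top : Iν ≠ ⊤ := by
    have h1 : Iν ≤ ENNReal.ofReal lam * (ENNReal.ofReal (r^2) * volume b) := by
      rw [hIνdef, hνr, lintegral_smul_measure]
      refine mul_le_mul_right ?_ _
      calc (∫⁻ y in b, ENNReal.ofReal (‖y‖^2))
          ≤ ∫⁻ _ in b, ENNReal.ofReal (r^2) := by
            refine setLIntegral_mono measurable_const fun y hy => ?_
            have : ‖y‖ ≤ r := by simpa [hbdef, dist_zero_right] using hy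
            exact ENNReal.ofReal_le_ofReal (by nlinarith [norm_nonneg y])
      _ = ENNReal.ofReal (r^2) * volume b := by
            rw [setLIntegral_const, mul_comm]
    exact ne_top_of_le_ne_top (by
      exact ENNReal.mul_ne_top ENNReal.ofReal_ne_top
        (ENNReal.mul_ne_top ENNReal.ofReal_ne_top measure_closedBall_lt_top.ne)) h1
  have hμmom : (∫⁻ x, ENNReal.ofReal (‖x‖^2) ∂μ) = ENNReal.ofReal (c^2) * Iν := by
    rw [← hmap, lintegral_map m1 mT, hIνdef, ← lintegral_const_mul _ m1]
    refine lintegral_congr fun y => ?_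
    rw [norm_smul, Real.norm_eq_abs, abs_of_pos hc0, mul_pow,
      ENNReal.ofReal_mul (sq_nonneg c)]
  -- upper bound for the ball
  have hW : W2sq μ ν ≤ ENNReal.ofReal ((c-1)^2) * Iν := by
    have hg : Measurable fun y : EuclideanSpace ℝ (Fin d) => (c • y, y) :=
      mT.prodMk measurable_id
    have h1 : (ν.map (fun y => (c • y, y))).map Prod.fst = μ := by
      rw [Measure.map_map measurable_fst hg]
      exact hmap
    have h2 : (ν.map (fun y => (c • y, y))).map Prod.snd = ν := by
      rw [Measure.map_map measurable_snd hg]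
      exact Measure.map_id
    refine le_trans (W2sq_le _ h1 h2) ?_
    rw [lintegral_map m2 hg, hIνdef, ← lintegral_const_mul _ m1]
    refine le_of_eq (lintegral_congr fun y => ?_)
    have hsub : c • y - y = (c - 1) • y := by rw [sub_smul, one_smul]
    rw [hsub, norm_smul, Real.norm_eq_abs, mul_pow, sq_abs,
      ENNReal.ofReal_mul (sq_nonneg _)]
  -- mass in the required form
  have hvolB : volume B = ENNReal.ofReal lam * volume b := by
    rw [hBdef, hbdef, Measure.addHaar_closedBall _ _ hR.le,
      Measure.addHaar_closedBall _ _ hr.le, finrank_euclideanSpace_fin,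
      mul_pow, hcd, ENNReal.ofReal_mul hlam0.le, mul_assoc]
  have hmass' : (∫ x, ρ x) = (volume B).toReal := by
    rw [hmass, hvolB, ENNReal.toReal_mul, ENNReal.toReal_ofReal hlam0.le]
  obtain ⟨hbt1, hbt2⟩ := bathtub d (c * r) hR ρ hm hicc hmass'
  have hμmom' : (∫⁻ x, ENNReal.ofReal (‖x‖^2) ∂μ)
      = ∫⁻ x in B, ENNReal.ofReal (‖x‖^2) := by rw [hμr]
  -- bathtub in ENNReal form
  have hbath : ENNReal.ofReal (c^2) * Iν ≤ Iρ := by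
    rw [← hμmom, hμmom']
    exact hbt1
  -- lower bound specialised
  have hlow : ∀ c' : ℝ, 1 ≤ c' →
      ENNReal.ofReal (1 - 1/c') * Iρ ≤ W2sq ρμ ν + ENNReal.ofReal (c' - 1) * Iν := by
    intro c' hc'
    have := le_W2sq ρμ ν hc'
    rwa [hρmom] at this
  -- diagonal coupling: W2sq of equal measures vanishes
  have hdiag : ∀ κ : Measure (EuclideanSpace ℝ (Fin d)), W2sq κ κ = 0 := by
    intro κ
    have hg : Measurable fun x : EuclideanSpace ℝ (Fin d) => (x, x) :=
      measurable_id.prodMk measurable_id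
    have h1 : (κ.map (fun x => (x, x))).map Prod.fst = κ := by
      rw [Measure.map_map measurable_fst hg]; exact Measure.map_id
    have h2 : (κ.map (fun x => (x, x))).map Prod.snd = κ := by
      rw [Measure.map_map measurable_snd hg]; exact Measure.map_id
    refine le_antisymm (le_trans (W2sq_le _ h1 h2) ?_) (zero_le)
    rw [lintegral_map m2 hg]
    simp
  -- case lam = 1
  rcases eq_or_lt_of_le hlam with hlam1 | hlam1
  · -- lam = 1 : μ = ν
    have hceq : c = 1 := by rw [hcdef, ← hlam1, Real.one_rpow]
    have hμν : μ = ν := by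
      rw [hμdef, hνdef, hBdef, hbdef, hceq, one_mul, ← hlam1, ENNReal.ofReal_one]
    constructor
    · rw [hμν, hdiag ν]
      exact zero_le
    · intro heq
      have hWρ : W2sq ρμ ν = 0 := by
        rw [← heq, hμν, hdiag ν]
      -- Iρ ≤ Iν via c' → 1
      have hkey : ∀ c' : ℝ, 1 < c' → Iρ ≤ ENNReal.ofReal c' * Iν := by
        intro c' hc'
        have h := hlow c' hc'.le
        rw [hWρ, zero_add] at h
        have hne1 : c' ≠ 0 := by linarith
        have hne2 : c' - 1 ≠ 0 := by linarith
        have hker : ENNReal.ofReal (c'/(c'-1)) * ENNReal.ofReal (1 - 1/c') = 1 := by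
          rw [← ENNReal.ofReal_mul (le_of_lt (div_pos (by linarith) (by linarith))),
            ← ENNReal.ofReal_one]
          congr 1
          field_simp
        calc Iρ = ENNReal.ofReal (c'/(c'-1)) * (ENNReal.ofReal (1 - 1/c') * Iρ) := by
              rw [← mul_assoc, hker, one_mul]
        _ ≤ ENNReal.ofReal (c'/(c'-1)) * (ENNReal.ofReal (c' - 1) * Iν) :=
              mul_le_mul_right h _
        _ = ENNReal.ofReal c' * Iν := by
              rw [← mul_assoc,
                ← ENNReal.ofReal_mul (le_of_lt (div_pos (by linarith) (by linarith)))]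
              congr 2
              field_simp
      have hIρIν : Iρ ≤ Iν := by
        refine ENNReal.le_of_forall_pos_le_add fun ε hε hlt => ?_
        by_cases hIν0 : Iν = 0
        · have := hkey 2 one_lt_two
          rw [hIν0, mul_zero] at this
          exact le_trans this (zero_le)
        · have htν : 0 < Iν.toReal := ENNReal.toReal_pos hIν0 hIν_ne_top
          set c' : ℝ := 1 + (ε : ℝ) / Iν.toReal with hc'def
          have hc' : 1 < c' := by
            rw [hc'def]
            have : 0 < (ε : ℝ) / Iν.toReal := by positivity
            linarith
          refine le_trans (hkey c' hc') (le_of_eq ?_)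
          rw [hc'def, ENNReal.ofReal_add zero_le_one (by positivity), ENNReal.ofReal_one,
            add_mul, one_mul]
          congr 1
          rw [← ENNReal.ofReal_toReal hIν_ne_top, ← ENNReal.ofReal_mul (by positivity),
            ENNReal.ofReal_toReal hIν_ne_top]
          rw [div_mul_cancel₀ _ htν.ne']
          exact ENNReal.ofReal_coe_nnreal
      have hfin : Iρ ≤ ∫⁻ x in B, ENNReal.ofReal (‖x‖^2) := by
        have hone : ENNReal.ofReal (c^2) * Iν = Iν := by
          rw [hceq]; simp
        rw [← hμmom', hμmom, hone]
        exact hIρIν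
      exact hbt2 hfin
  · -- lam > 1, hence c > 1
    have hc1' : 1 < c := by
      rw [hcdef]
      rw [show (1:ℝ) = lam ^ (0:ℝ) by rw [Real.rpow_zero]]
      exact Real.rpow_lt_rpow_of_exponent_lt hlam1 (by positivity)
    have hcm1 : 0 < c - 1 := by linarith
    have hcne : c ≠ 0 := hc0.ne'
    have hnn1c : (0:ℝ) ≤ 1 - 1/c := by
      rw [sub_nonneg, div_le_one hc0]; exact hc1
    have harith : ENNReal.ofReal ((c-1)^2) * Iν + ENNReal.ofReal (c-1) * Iν
        = ENNReal.ofReal (1 - 1/c) * (ENNReal.ofReal (c^2) * Iν) := by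
      rw [← add_mul, ← ENNReal.ofReal_add (sq_nonneg _) hcm1.le, ← mul_assoc,
        ← ENNReal.ofReal_mul hnn1c]
      congr 2
      field_simp
      ring
    have hfinK : ENNReal.ofReal (c-1) * Iν ≠ ⊤ :=
      ENNReal.mul_ne_top ENNReal.ofReal_ne_top hIν_ne_top
    have hchain : W2sq μ ν + ENNReal.ofReal (c-1) * Iν
        ≤ W2sq ρμ ν + ENNReal.ofReal (c-1) * Iν := by
      calc W2sq μ ν + ENNReal.ofReal (c-1) * Iν
          ≤ ENNReal.ofReal ((c-1)^2) * Iν + ENNReal.ofReal (c-1) * Iν :=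
            add_le_add_left hW _
      _ = ENNReal.ofReal (1 - 1/c) * (ENNReal.ofReal (c^2) * Iν) := harith
      _ ≤ ENNReal.ofReal (1 - 1/c) * Iρ := mul_le_mul_right hbath _
      _ ≤ W2sq ρμ ν + ENNReal.ofReal (c-1) * Iν := hlow c hc1
    have hmain : W2sq μ ν ≤ W2sq ρμ ν :=
      ENNReal.le_of_add_le_add_right hfinK hchain
    refine ⟨hmain, ?_⟩
    intro heq
    -- equality case: W2sq ρμ ν ≤ ofReal((c-1)^2) * Iν
    have hWρ : W2sq ρμ ν ≤ ENNReal.ofReal ((c-1)^2) * Iν := by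
      rw [← heq]; exact hW
    have h := hlow c hc1
    have h2 : ENNReal.ofReal (1 - 1/c) * Iρ
        ≤ ENNReal.ofReal (1 - 1/c) * (ENNReal.ofReal (c^2) * Iν) := by
      rw [← harith]
      exact le_trans h (add_le_add_left hWρ _)
    have hker : ENNReal.ofReal (c/(c-1)) * ENNReal.ofReal (1 - 1/c) = 1 := by
      rw [← ENNReal.ofReal_mul (le_of_lt (div_pos hc0 hcm1)), ← ENNReal.ofReal_one]
      congr 1
      field_simp
    have hIρle : Iρ ≤ ENNReal.ofReal (c^2) * Iν := by
      calc Iρ = ENNReal.ofReal (c/(c-1)) * (ENNReal.ofReal (1 - 1/c) * Iρ) := by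
            rw [← mul_assoc, hker, one_mul]
      _ ≤ ENNReal.ofReal (c/(c-1))
            * (ENNReal.ofReal (1 - 1/c) * (ENNReal.ofReal (c^2) * Iν)) :=
            mul_le_mul_right h2 _
      _ = ENNReal.ofReal (c^2) * Iν := by
            rw [← mul_assoc, hker, one_mul]
    have hfin : Iρ ≤ ∫⁻ x in B, ENNReal.ofReal (‖x‖^2) := by
      rw [← hμmom', hμmom]
      exact hIρle
    exact hbt2 hfin
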